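/- Let m_i^{(a)} (1 ≤ a ≤ n, i ≥ 1) be nonnegative integers, finitely many nonzero, and fix a row index η_a for each a in an interval [k, l] with η_{a-1} ≥ η_a ≥ η_{a+1}. Define the type-A charge c(ν) = (1/2)·Σ_{a,b} C_{ab} Σ_{j,k} min(j,k) m_j^{(a)} m_k^{(b)} − Σ_{a,j,k} min(j,k) L_j^{(a)} m_k^{(a)}, where C is the Cartan-like matrix C_{ab} = 2δ_{ab} − δ_{a,b-1} − δ_{a,b+1} (with boundary modification C_{ll} = 1). If m̃ is obtained from m by replacing, for each a ∈ [k,l], one part of size η_a by a part of size η_a − 1 (i.e. m̃_i^{(a)} = m_i^{(a)} − δ_{i,η_a} + δ_{i,η_a−1}), then c(ν) − c(ν̃) = 2Σ_{k≤a<l, i≥η_a} m_i^{(a)} − Σ_{k-1≤a<l, i≥η_{a+1}} m_i^{(a)} − Σ_{k≤a<l, i≥η_a} m_i^{(a+1)} + Σ_{i≥η_l} m_i^{(l)} − Σ_{k≤a<l}(1 − δ_{η_a η_{a+1}}) − 1/2 − Σ_{k≤a≤l, i≥η_a} L_i^{(a)}. -/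

import Mathlib

open Finset

/-- `tailSum f t = Σ_{i ≥ t} f i` for a finitely supported `f`. -/
def tailSum (f : ℕ →₀ ℕ) (t : ℕ) : ℕ :=
  (f.support.filter fun i => t ≤ i).sum fun i => f i

/-- The pairing `Σ_{j,j'} min(j,j') f_j g_{j'}`. -/
def pairQ (f g : ℕ →₀ ℕ) : ℚ :=
  f.support.sum fun j => g.support.sum fun j' => (min j j' : ℚ) * f j * g j'

/-- The Cartan-like matrix `C_{ab} = 2δ_{ab} − δ_{a,b-1} − δ_{a,b+1}` with the
boundary modification `C_{ll} = 1`. -/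
def cartanA (l a b : ℕ) : ℤ :=
  (if a = b then (if a = l then 1 else 2) else 0)
    - (if a + 1 = b then 1 else 0) - (if b + 1 = a then 1 else 0)

/-- The type-`A` charge
`c(ν) = (1/2)·Σ_{a,b} C_{ab} Σ_{j,k} min(j,k) m_j^{(a)} m_k^{(b)}
        − Σ_{a,j,k} min(j,k) L_j^{(a)} m_k^{(a)}`. -/
noncomputable def chargeA (l : ℕ) (L m : ℕ → ℕ →₀ ℕ) : ℚ :=
  (1 / 2) * ((Icc 1 l).sum fun a => (Icc 1 l).sum fun b =>
      (cartanA l a b : ℚ) * pairQ (m a) (m b))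
    - (Icc 1 l).sum fun a => pairQ (L a) (m a)

namespace Stmt11Aux

/-- indicator function -/
def e (t : ℕ) : ℕ → ℚ := fun i => if t = i then 1 else 0

def PQ (N : ℕ) (f g : ℕ → ℚ) : ℚ :=
  (range N).sum fun j => (range N).sum fun j' => (min j j' : ℚ) * f j * g j'

def AQ (N t : ℕ) (f : ℕ → ℚ) : ℚ := (range N).sum fun j => (min j t : ℚ) * f j

def TQ (N t : ℕ) (f : ℕ → ℚ) : ℚ := (range N).sum fun j => if t ≤ j then f j else 0

lemma pairQ_eq_PQ (N : ℕ) (f g : ℕ →₀ ℕ) (hf : ∀ i ∈ f.support, i < N)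
    (hg : ∀ i ∈ g.support, i < N) :
    pairQ f g = PQ N (fun i => (f i : ℚ)) (fun i => (g i : ℚ)) := by
  have h1 : ∀ j : ℕ, (g.support.sum fun j' => (min j j' : ℚ) * f j * g j')
      = (range N).sum fun j' => (min j j' : ℚ) * f j * g j' := by
    intro j
    apply Finset.sum_subset (fun i hi => Finset.mem_range.2 (hg i hi))
    intro j' _ h
    simp [Finsupp.notMem_support_iff.1 h]
  unfold pairQ PQ
  simp only [h1]
  apply Finset.sum_subset (fun i hi => Finset.mem_range.2 (hf i hi))
  intro j _ h
  exact Finset.sum_eq_zero fun j' _ => by simp [Finsupp.notMem_support_iff.1 h]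

lemma tailSum_eq_TQ (N t : ℕ) (f : ℕ →₀ ℕ) (hf : ∀ i ∈ f.support, i < N) :
    (tailSum f t : ℚ) = TQ N t (fun i => (f i : ℚ)) := by
  unfold tailSum TQ
  push_cast
  rw [Finset.sum_filter]
  apply Finset.sum_subset (fun i hi => Finset.mem_range.2 (hf i hi))
  intro j _ h
  simp [Finsupp.notMem_support_iff.1 h]

lemma PQ_add_right (N : ℕ) (f g h : ℕ → ℚ) :
    PQ N f (fun i => g i + h i) = PQ N f g + PQ N f h := by
  unfold PQ
  rw [← Finset.sum_add_distrib]
  refine Finset.sum_congr rfl fun j _ => ?_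
  rw [← Finset.sum_add_distrib]
  exact Finset.sum_congr rfl fun j' _ => by ring

lemma PQ_sub_right (N : ℕ) (f g h : ℕ → ℚ) :
    PQ N f (fun i => g i - h i) = PQ N f g - PQ N f h := by
  unfold PQ
  rw [← Finset.sum_sub_distrib]
  refine Finset.sum_congr rfl fun j _ => ?_
  rw [← Finset.sum_sub_distrib]
  exact Finset.sum_congr rfl fun j' _ => by ring

lemma PQ_comm (N : ℕ) (f g : ℕ → ℚ) : PQ N f g = PQ N g f := by
  unfold PQ
  rw [Finset.sum_comm]
  exact Finset.sum_congr rfl fun j _ => Finset.sum_congr rfl fun j' _ => by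
    rw [min_comm]; ring

lemma PQ_add_left (N : ℕ) (f g h : ℕ → ℚ) :
    PQ N (fun i => f i + g i) h = PQ N f h + PQ N g h := by
  rw [PQ_comm, PQ_add_right, PQ_comm N h f, PQ_comm N h g]

lemma PQ_sub_left (N : ℕ) (f g h : ℕ → ℚ) :
    PQ N (fun i => f i - g i) h = PQ N f h - PQ N g h := by
  rw [PQ_comm, PQ_sub_right, PQ_comm N h f, PQ_comm N h g]

lemma PQ_e_right (N t : ℕ) (ht : t < N) (f : ℕ → ℚ) : PQ N f (e t) = AQ N t f := by
  unfold PQ AQ e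
  refine Finset.sum_congr rfl fun j _ => ?_
  rw [Finset.sum_eq_single t]
  · simp
  · intro b _ hb; simp [Ne.symm hb]
  · intro h; exact absurd (Finset.mem_range.2 ht) h

lemma PQ_e_left (N t : ℕ) (ht : t < N) (f : ℕ → ℚ) : PQ N (e t) f = AQ N t f := by
  rw [PQ_comm]; exact PQ_e_right N t ht f

lemma AQ_sub (N t : ℕ) (f g : ℕ → ℚ) :
    AQ N t (fun i => f i - g i) = AQ N t f - AQ N t g := by
  unfold AQ
  rw [← Finset.sum_sub_distrib]
  exact Finset.sum_congr rfl fun j _ => by ring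

lemma AQ_sub_TQ (N t : ℕ) (ht : 1 ≤ t) (f : ℕ → ℚ) :
    AQ N t f - AQ N (t - 1) f = TQ N t f := by
  unfold AQ TQ
  rw [← Finset.sum_sub_distrib]
  refine Finset.sum_congr rfl fun j _ => ?_
  rcases le_or_gt t j with h | h
  · rw [if_pos h, min_eq_right (by exact_mod_cast h),
      min_eq_right (show ((t-1:ℕ):ℚ) ≤ (j:ℚ) by exact_mod_cast by omega),
      Nat.cast_sub ht]
    ring
  · rw [if_neg (by omega),
      min_eq_left (show ((j:ℕ):ℚ) ≤ (t:ℚ) by exact_mod_cast h.le),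
      min_eq_left (show ((j:ℕ):ℚ) ≤ ((t-1:ℕ):ℚ) by exact_mod_cast by omega)]
    ring

lemma AQ_e (N t s : ℕ) (hs : s < N) : AQ N t (e s) = min (s:ℚ) (t:ℚ) := by
  unfold AQ e
  rw [Finset.sum_eq_single s]
  · simp
  · intro b _ hb; simp [Ne.symm hb]
  · intro h; exact absurd (Finset.mem_range.2 hs) h

/-- the discrete "second difference of min" -/
lemma minD (s t : ℕ) (hs : 1 ≤ s) (ht : 1 ≤ t) :
    min ((s-1:ℕ):ℚ) ((t-1:ℕ):ℚ) - min ((s-1:ℕ):ℚ) (t:ℚ) - min (s:ℚ) ((t-1:ℕ):ℚ)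
        + min (s:ℚ) (t:ℚ)
      = if s = t then 1 else 0 := by
  have c : ∀ a b : ℕ, min (a:ℚ) (b:ℚ) = ((min a b : ℕ) : ℚ) := fun a b =>
    (Nat.cast_min a b).symm
  rw [c, c, c, c]
  have key : (min (s-1) (t-1) + min s t : ℕ) =
      min (s-1) t + min s (t-1) + (if s = t then 1 else 0) := by
    split_ifs with h <;> omega
  have := congrArg (fun n : ℕ => (n : ℚ)) key
  push_cast at this
  split_ifs at this ⊢ with h
  · push_cast at this ⊢; linarith
  · push_cast at this ⊢; linarith

lemma PQ_d_left (N s : ℕ) (hs : 1 ≤ s) (hsN : s < N) (g : ℕ → ℚ) :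
    PQ N (fun i => e (s-1) i - e s i) g = - TQ N s g := by
  rw [PQ_sub_left, PQ_e_left N _ (by omega), PQ_e_left N _ hsN, ← AQ_sub_TQ N s hs g]
  ring

lemma PQ_d_right (N s : ℕ) (hs : 1 ≤ s) (hsN : s < N) (f : ℕ → ℚ) :
    PQ N f (fun i => e (s-1) i - e s i) = - TQ N s f := by
  rw [PQ_comm]; exact PQ_d_left N s hs hsN f

lemma PQ_dd (N s t : ℕ) (hs : 1 ≤ s) (ht : 1 ≤ t) (hsN : s < N) (htN : t < N) :
    PQ N (fun i => e (s-1) i - e s i) (fun i => e (t-1) i - e t i)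
      = if s = t then 1 else 0 := by
  rw [PQ_sub_left, PQ_e_left N _ (by omega : s - 1 < N), PQ_e_left N _ hsN,
    AQ_sub, AQ_sub, AQ_e N (s-1) (t-1) (by omega), AQ_e N (s-1) t htN,
    AQ_e N s (t-1) (by omega), AQ_e N s t htN]
  have := minD t s ht hs
  rw [show ((if t = s then (1:ℚ) else 0) = if s = t then 1 else 0) by
    rcases eq_or_ne s t with h | h
    · rw [if_pos h.symm, if_pos h]
    · rw [if_neg (Ne.symm h), if_neg h]] at this
  linarith

lemma cartanA_symm (l a b : ℕ) : cartanA l a b = cartanA l b a := by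
  unfold cartanA
  rcases eq_or_ne a b with h | h
  · subst h; ring
  · rw [if_neg h, if_neg (Ne.symm h)]; ring

lemma cartanA_cast (l a b : ℕ) : ((cartanA l a b : ℤ) : ℚ) =
    (if a = b then (if a = l then (1:ℚ) else 2) else 0)
      - (if a + 1 = b then 1 else 0) - (if b + 1 = a then 1 else 0) := by
  unfold cartanA
  split_ifs <;> norm_num

lemma sum_cartan_mul (l b : ℕ) (hb1 : 1 ≤ b) (hbl : b ≤ l) (X : ℕ → ℚ) :
    ((Icc 1 l).sum fun a => (cartanA l a b : ℚ) * X a)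
      = (if b = l then 1 else 2) * X b
        - (if b - 1 ∈ Icc 1 l then X (b-1) else 0)
        - (if b + 1 ∈ Icc 1 l then X (b+1) else 0) := by
  have hexp : ∀ a, (cartanA l a b : ℚ) * X a
      = (if a = b then (if b = l then (1:ℚ) else 2) * X a else 0)
        - (if a = b - 1 then X a else 0)
        - (if b + 1 = a then X a else 0) := by
    intro a
    rw [cartanA_cast]
    split_ifs <;> first | ring1 | (exfalso; omega)
  simp only [hexp]
  rw [Finset.sum_sub_distrib, Finset.sum_sub_distrib,
    Finset.sum_ite_eq' (Icc 1 l) b, Finset.sum_ite_eq' (Icc 1 l) (b-1),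
    Finset.sum_ite_eq (Icc 1 l) (b+1), if_pos (mem_Icc.2 ⟨hb1, hbl⟩)]

lemma sum_cartan_mul' (l a : ℕ) (ha1 : 1 ≤ a) (hal : a ≤ l) (Y : ℕ → ℚ) :
    ((Icc 1 l).sum fun b => (cartanA l a b : ℚ) * Y b)
      = (if a = l then 1 else 2) * Y a
        - (if a - 1 ∈ Icc 1 l then Y (a-1) else 0)
        - (if a + 1 ∈ Icc 1 l then Y (a+1) else 0) := by
  rw [show ((Icc 1 l).sum fun b => (cartanA l a b : ℚ) * Y b)
      = (Icc 1 l).sum fun b => (cartanA l b a : ℚ) * Y b from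
    Finset.sum_congr rfl fun b _ => by rw [cartanA_symm]]
  exact sum_cartan_mul l a ha1 hal Y

end Stmt11Aux

open Stmt11Aux

/-- Lemma 4.1 of the paper (change of charge under one box-removal step `δ`):
if `m̃_i^{(a)} = m_i^{(a)} − δ_{i,η_a} + δ_{i,η_a−1}` for `k ≤ a ≤ l`
(one part of size `η_a` shortened by one in each color of `[k,l]`, with
`η_{a-1} ≥ η_a ≥ η_{a+1}`), then
`c(ν) − c(ν̃) = 2Σ_{k≤a<l, i≥η_a} m_i^{(a)} − Σ_{k-1≤a<l, i≥η_{a+1}} m_i^{(a)}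
 − Σ_{k≤a<l, i≥η_a} m_i^{(a+1)} + Σ_{i≥η_l} m_i^{(l)}
 − Σ_{k≤a<l}(1 − δ_{η_a η_{a+1}}) − 1/2 − Σ_{k≤a≤l, i≥η_a} L_i^{(a)}`. -/
theorem stmt11 (k l : ℕ) (hk : 1 ≤ k) (hkl : k ≤ l)
    (L m : ℕ → ℕ →₀ ℕ) (hm0 : m 0 = 0)
    (η : ℕ → ℕ)
    (hη1 : ∀ a, k ≤ a → a ≤ l → 1 ≤ η a)
    (hηmono : ∀ a, k ≤ a → a < l → η (a + 1) ≤ η a)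
    (hrow : ∀ a, k ≤ a → a ≤ l → 1 ≤ (m a) (η a))
    (m' : ℕ → ℕ →₀ ℕ)
    (hm' : ∀ a, m' a = if k ≤ a ∧ a ≤ l
        then m a + Finsupp.single (η a - 1) 1 - Finsupp.single (η a) 1
        else m a) :
    chargeA l L m - chargeA l L m' =
      2 * ((Ico k l).sum fun a => (tailSum (m a) (η a) : ℚ))
        - ((Ico (k - 1) l).sum fun a => (tailSum (m a) (η (a + 1)) : ℚ))
        - ((Ico k l).sum fun a => (tailSum (m (a + 1)) (η a) : ℚ))
        + (tailSum (m l) (η l) : ℚ)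
        - ((Ico k l).sum fun a => if η a = η (a + 1) then (0 : ℚ) else 1)
        - 1 / 2
        - ((Icc k l).sum fun a => (tailSum (L a) (η a) : ℚ)) := by
  classical
  classical
  obtain ⟨N, hsupm, hsupm', hsupL, hηN⟩ :
      ∃ N : ℕ, (∀ a, a ≤ l → ∀ i ∈ (m a).support, i < N) ∧
        (∀ a, a ≤ l → ∀ i ∈ (m' a).support, i < N) ∧
        (∀ a, a ≤ l → ∀ i ∈ (L a).support, i < N) ∧
        (∀ a, a ≤ l → η a < N) := by
    refine ⟨((Icc 0 l).sup fun a =>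
        max ((m a).support.sup id) (max ((m' a).support.sup id)
          (max ((L a).support.sup id) (η a)))) + 1, ?_, ?_, ?_, ?_⟩ <;>
      intro a ha
    · intro i hi
      have h1 : i ≤ (m a).support.sup id := Finset.le_sup (f := id) hi
      have h2 : max ((m a).support.sup id) (max ((m' a).support.sup id)
            (max ((L a).support.sup id) (η a)))
          ≤ (Icc 0 l).sup fun a => max ((m a).support.sup id)
            (max ((m' a).support.sup id) (max ((L a).support.sup id) (η a))) :=
        Finset.le_sup (f := fun a => max ((m a).support.sup id)
          (max ((m' a).support.sup id) (max ((L a).support.sup id) (η a))))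
          (mem_Icc.2 ⟨Nat.zero_le _, ha⟩)
      omega
    · intro i hi
      have h1 : i ≤ (m' a).support.sup id := Finset.le_sup (f := id) hi
      have h2 : max ((m a).support.sup id) (max ((m' a).support.sup id)
            (max ((L a).support.sup id) (η a)))
          ≤ (Icc 0 l).sup fun a => max ((m a).support.sup id)
            (max ((m' a).support.sup id) (max ((L a).support.sup id) (η a))) :=
        Finset.le_sup (f := fun a => max ((m a).support.sup id)
          (max ((m' a).support.sup id) (max ((L a).support.sup id) (η a))))
          (mem_Icc.2 ⟨Nat.zero_le _, ha⟩)
      omega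
    · intro i hi
      have h1 : i ≤ (L a).support.sup id := Finset.le_sup (f := id) hi
      have h2 : max ((m a).support.sup id) (max ((m' a).support.sup id)
            (max ((L a).support.sup id) (η a)))
          ≤ (Icc 0 l).sup fun a => max ((m a).support.sup id)
            (max ((m' a).support.sup id) (max ((L a).support.sup id) (η a))) :=
        Finset.le_sup (f := fun a => max ((m a).support.sup id)
          (max ((m' a).support.sup id) (max ((L a).support.sup id) (η a))))
          (mem_Icc.2 ⟨Nat.zero_le _, ha⟩)
      omega
    · have h2 : max ((m a).support.sup id) (max ((m' a).support.sup id)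
            (max ((L a).support.sup id) (η a)))
          ≤ (Icc 0 l).sup fun a => max ((m a).support.sup id)
            (max ((m' a).support.sup id) (max ((L a).support.sup id) (η a))) :=
        Finset.le_sup (f := fun a => max ((m a).support.sup id)
          (max ((m' a).support.sup id) (max ((L a).support.sup id) (η a))))
          (mem_Icc.2 ⟨Nat.zero_le _, ha⟩)
      omega
  -- coefficientwise decomposition of `m'`
  have hdecomp : ∀ a, k ≤ a → a ≤ l →
      (fun i => ((m' a) i : ℚ)) = fun i => ((m a) i : ℚ) + (e (η a - 1) i - e (η a) i) := by
    intro a hka hal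
    funext i
    have hη := hη1 a hka hal
    have hr := hrow a hka hal
    rw [hm' a, if_pos ⟨hka, hal⟩]
    rw [Finsupp.tsub_apply, Finsupp.add_apply, Finsupp.single_apply, Finsupp.single_apply]
    simp only [e]
    rcases eq_or_ne (η a) i with h1 | h1
    · have hne : η a - 1 ≠ i := by omega
      have hle : (1:ℕ) ≤ (m a) i := by rw [← h1]; exact hr
      rw [if_neg hne, if_neg hne, if_pos h1, if_pos h1, Nat.add_zero, Nat.cast_sub hle]
      push_cast
      ring
    · rcases eq_or_ne (η a - 1) i with h2 | h2
      · rw [if_pos h2, if_pos h2, if_neg h1, if_neg h1, Nat.sub_zero]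
        push_cast
        ring
      · rw [if_neg h2, if_neg h2, if_neg h1, if_neg h1, Nat.add_zero, Nat.sub_zero]
        ring
  have hdecomp' : ∀ a, ¬(k ≤ a ∧ a ≤ l) → m' a = m a := by
    intro a ha
    rw [hm' a, if_neg ha]
  -- the per-pair difference
  have hDelta : ∀ a ∈ Icc 1 l, ∀ b ∈ Icc 1 l,
      pairQ (m a) (m b) - pairQ (m' a) (m' b) =
        (if b ∈ Icc k l then TQ N (η b) (fun i => ((m a) i : ℚ)) else 0)
        + (if a ∈ Icc k l then TQ N (η a) (fun i => ((m b) i : ℚ)) else 0)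
        - (if a ∈ Icc k l ∧ b ∈ Icc k l then (if η a = η b then (1:ℚ) else 0) else 0) := by
    intro a ha b hb
    have hal : a ≤ l := (mem_Icc.1 ha).2
    have hbl : b ≤ l := (mem_Icc.1 hb).2
    rw [pairQ_eq_PQ N (m a) (m b) (hsupm a hal) (hsupm b hbl),
      pairQ_eq_PQ N (m' a) (m' b) (hsupm' a hal) (hsupm' b hbl)]
    by_cases hA : a ∈ Icc k l <;> by_cases hB : b ∈ Icc k l
    · obtain ⟨hka, -⟩ := mem_Icc.1 hA
      obtain ⟨hkb, -⟩ := mem_Icc.1 hB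
      have hηa := hη1 a hka hal
      have hηb := hη1 b hkb hbl
      rw [if_pos hA, if_pos hB, if_pos ⟨hA, hB⟩,
        hdecomp a hka hal, hdecomp b hkb hbl,
        PQ_add_left, PQ_add_right, PQ_add_right,
        PQ_d_right N (η b) hηb (hηN b hbl),
        PQ_d_left N (η a) hηa (hηN a hal),
        PQ_dd N (η a) (η b) hηa hηb (hηN a hal) (hηN b hbl)]
      ring
    · obtain ⟨hka, -⟩ := mem_Icc.1 hA
      have hηa := hη1 a hka hal
      rw [if_pos hA, if_neg hB, if_neg (fun h => hB h.2),
        hdecomp a hka hal, hdecomp' b (fun h => hB (mem_Icc.2 h)),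
        PQ_add_left, PQ_d_left N (η a) hηa (hηN a hal)]
      ring
    · obtain ⟨hkb, -⟩ := mem_Icc.1 hB
      have hηb := hη1 b hkb hbl
      rw [if_pos hB, if_neg hA, if_neg (fun h => hA h.1),
        hdecomp' a (fun h => hA (mem_Icc.2 h)), hdecomp b hkb hbl,
        PQ_add_right, PQ_d_right N (η b) hηb (hηN b hbl)]
      ring
    · rw [if_neg hA, if_neg hB, if_neg (fun h => hA h.1),
        hdecomp' a (fun h => hA (mem_Icc.2 h)), hdecomp' b (fun h => hB (mem_Icc.2 h))]
      ring
  -- the first double sum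
  have hS1 : ((Icc 1 l).sum fun a => (Icc 1 l).sum fun b => (cartanA l a b : ℚ) * (if b ∈ Icc k l then TQ N (η b) (fun i => ((m a) i : ℚ)) else 0)) = 2 * ((Ico k l).sum fun a => TQ N (η a) fun i => ((m a) i : ℚ)) + (TQ N (η l) fun i => ((m l) i : ℚ)) - ((Ico (k - 1) l).sum fun a => TQ N (η (a + 1)) fun i => ((m a) i : ℚ)) - ((Ico k l).sum fun a => TQ N (η a) fun i => ((m (a + 1)) i : ℚ)) := by
    rw [Finset.sum_comm]
    have h1 : ∀ b ∈ Icc 1 l, ((Icc 1 l).sum fun a =>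
        (cartanA l a b : ℚ) * (if b ∈ Icc k l then TQ N (η b) (fun i => ((m a) i : ℚ)) else 0))
        = if b ∈ Icc k l then ((Icc 1 l).sum fun a =>
            (cartanA l a b : ℚ) * TQ N (η b) (fun i => ((m a) i : ℚ))) else 0 := by
      intro b _
      by_cases hb : b ∈ Icc k l
      · rw [if_pos hb]
        exact Finset.sum_congr rfl fun a _ => by rw [if_pos hb]
      · rw [if_neg hb]
        exact Finset.sum_eq_zero fun a _ => by rw [if_neg hb, mul_zero]
    rw [Finset.sum_congr rfl h1, Finset.sum_ite_mem,
      Finset.inter_eq_right.2 (Finset.Icc_subset_Icc hk le_rfl)]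
    have h2 : ∀ b ∈ Icc k l, ((Icc 1 l).sum fun a =>
        (cartanA l a b : ℚ) * TQ N (η b) (fun i => ((m a) i : ℚ)))
        = (if b = l then 1 else 2) * TQ N (η b) (fun i => ((m b) i : ℚ))
          - (if b - 1 ∈ Icc 1 l then TQ N (η b) (fun i => ((m (b-1)) i : ℚ)) else 0)
          - (if b + 1 ∈ Icc 1 l then TQ N (η b) (fun i => ((m (b+1)) i : ℚ)) else 0) := by
      intro b hb
      obtain ⟨hkb, hbl⟩ := mem_Icc.1 hb
      exact sum_cartan_mul l b (hk.trans hkb) hbl _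
    rw [Finset.sum_congr rfl h2, Finset.sum_sub_distrib, Finset.sum_sub_distrib]
    have p1 : ((Icc k l).sum fun b =>
        (if b = l then (1:ℚ) else 2) * TQ N (η b) (fun i => ((m b) i : ℚ)))
        = (TQ N (η l) fun i => ((m l) i : ℚ)) + 2 * ((Ico k l).sum fun a => TQ N (η a) fun i => ((m a) i : ℚ)) := by
      have h3 : ((Ico k l).sum fun b =>
          (if b = l then (1:ℚ) else 2) * TQ N (η b) (fun i => ((m b) i : ℚ)))
          = 2 * ((Ico k l).sum fun a => TQ N (η a) fun i => ((m a) i : ℚ)) := by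
        rw [Finset.mul_sum]
        exact Finset.sum_congr rfl fun b hb => by
          rw [if_neg (Nat.ne_of_lt (mem_Ico.1 hb).2)]
      rw [← Finset.Ico_insert_right hkl, Finset.sum_insert (by simp), if_pos rfl, one_mul, h3]
    have p2 : ((Icc k l).sum fun b =>
        (if b - 1 ∈ Icc 1 l then TQ N (η b) (fun i => ((m (b-1)) i : ℚ)) else 0))
        = ((Ico (k - 1) l).sum fun a => TQ N (η (a + 1)) fun i => ((m a) i : ℚ)) := by
      have himg : Icc k l = (Ico (k - 1) l).image (fun x => x + 1) := by
        ext x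
        simp only [mem_Icc, Finset.mem_image, mem_Ico]
        constructor
        · intro h
          exact ⟨x - 1, ⟨by omega, by omega⟩, by omega⟩
        · rintro ⟨y, hy, rfl⟩
          omega
      rw [himg, Finset.sum_image (by intro x _ y _ h; simp only at h; omega)]
      refine Finset.sum_congr rfl fun a ha => ?_
      obtain ⟨h1, h2⟩ := mem_Ico.1 ha
      simp only [Nat.add_sub_cancel]
      rcases Nat.eq_zero_or_pos a with h0 | h0
      · subst h0
        rw [if_neg (by simp)]
        have hz : ∀ i, ((m 0) i : ℚ) = 0 := fun i => by rw [hm0]; simp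
        simp [TQ, hz]
      · rw [if_pos (mem_Icc.2 ⟨h0, by omega⟩)]
    have p3 : ((Icc k l).sum fun b =>
        (if b + 1 ∈ Icc 1 l then TQ N (η b) (fun i => ((m (b+1)) i : ℚ)) else 0))
        = ((Ico k l).sum fun a => TQ N (η a) fun i => ((m (a + 1)) i : ℚ)) := by
      have h4 : ∀ b ∈ Icc k l,
          (if b + 1 ∈ Icc 1 l then TQ N (η b) (fun i => ((m (b+1)) i : ℚ)) else 0)
          = if b ∈ Ico k l then TQ N (η b) (fun i => ((m (b+1)) i : ℚ)) else 0 := by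
        intro b hb
        obtain ⟨h1, h2⟩ := mem_Icc.1 hb
        by_cases h : b + 1 ∈ Icc 1 l
        · obtain ⟨h3, h4⟩ := mem_Icc.1 h
          rw [if_pos h, if_pos (mem_Ico.2 ⟨h1, by omega⟩)]
        · rw [if_neg h, if_neg (fun hc => h (mem_Icc.2
            (by obtain ⟨u, v⟩ := mem_Ico.1 hc; omega)))]
      rw [Finset.sum_congr rfl h4, Finset.sum_ite_mem,
        Finset.inter_eq_right.2 Finset.Ico_subset_Icc_self]
    rw [p1, p2, p3]
    ring
  -- the second double sum equals the first by symmetry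
  have hS2 : ((Icc 1 l).sum fun a => (Icc 1 l).sum fun b => (cartanA l a b : ℚ) * (if a ∈ Icc k l then TQ N (η a) (fun i => ((m b) i : ℚ)) else 0)) = 2 * ((Ico k l).sum fun a => TQ N (η a) fun i => ((m a) i : ℚ)) + (TQ N (η l) fun i => ((m l) i : ℚ)) - ((Ico (k - 1) l).sum fun a => TQ N (η (a + 1)) fun i => ((m a) i : ℚ)) - ((Ico k l).sum fun a => TQ N (η a) fun i => ((m (a + 1)) i : ℚ)) := by
    rw [← hS1, Finset.sum_comm]
    exact Finset.sum_congr rfl fun b _ => Finset.sum_congr rfl fun a _ => by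
      rw [cartanA_symm]
  -- the third double sum
  have hS3 : ((Icc 1 l).sum fun a => (Icc 1 l).sum fun b => (cartanA l a b : ℚ) * (if a ∈ Icc k l ∧ b ∈ Icc k l then (if η a = η b then (1:ℚ) else 0) else 0)) = 2 * (((Ico k l).card : ℚ)) + 1 - 2 * ((Ico k l).sum fun a => if η a = η (a + 1) then (1 : ℚ) else 0) := by
    have h1 : ∀ a ∈ Icc 1 l, ((Icc 1 l).sum fun b => (cartanA l a b : ℚ) *
        (if a ∈ Icc k l ∧ b ∈ Icc k l then (if η a = η b then (1:ℚ) else 0) else 0))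
        = if a ∈ Icc k l then
            ((if a = l then (1:ℚ) else 2)
              - (if a - 1 ∈ Icc k l then (if η a = η (a-1) then (1:ℚ) else 0) else 0)
              - (if a + 1 ∈ Icc k l then (if η a = η (a+1) then (1:ℚ) else 0) else 0))
          else 0 := by
      intro a ha
      by_cases hA : a ∈ Icc k l
      · rw [if_pos hA]
        obtain ⟨hka, hal⟩ := mem_Icc.1 hA
        have e1 : ∀ b, ((cartanA l a b : ℚ) *
            (if a ∈ Icc k l ∧ b ∈ Icc k l then (if η a = η b then (1:ℚ) else 0) else 0))
            = (cartanA l a b : ℚ) *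
              (if b ∈ Icc k l then (if η a = η b then (1:ℚ) else 0) else 0) := by
          intro b
          by_cases hb : b ∈ Icc k l
          · rw [if_pos ⟨hA, hb⟩, if_pos hb]
          · rw [if_neg (fun h => hb h.2), if_neg hb]
        simp only [e1]
        rw [sum_cartan_mul' l a (hk.trans hka) hal]
        have q1 : (if a ∈ Icc k l then (if η a = η a then (1:ℚ) else 0) else 0) = 1 := by
          rw [if_pos hA, if_pos rfl]
        have q2 : (if a - 1 ∈ Icc 1 l then
              (if a - 1 ∈ Icc k l then (if η a = η (a-1) then (1:ℚ) else 0) else 0) else 0)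
            = (if a - 1 ∈ Icc k l then (if η a = η (a-1) then (1:ℚ) else 0) else 0) := by
          by_cases h : a - 1 ∈ Icc k l
          · obtain ⟨u, v⟩ := mem_Icc.1 h
            rw [if_pos (mem_Icc.2 ⟨by omega, v⟩)]
          · rw [if_neg h]
            simp
        have q3 : (if a + 1 ∈ Icc 1 l then
              (if a + 1 ∈ Icc k l then (if η a = η (a+1) then (1:ℚ) else 0) else 0) else 0)
            = (if a + 1 ∈ Icc k l then (if η a = η (a+1) then (1:ℚ) else 0) else 0) := by
          by_cases h : a + 1 ∈ Icc k l
          · obtain ⟨u, v⟩ := mem_Icc.1 h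
            rw [if_pos (mem_Icc.2 ⟨by omega, v⟩)]
          · rw [if_neg h]
            simp
        rw [q1, q2, q3, mul_one]
      · rw [if_neg hA]
        exact Finset.sum_eq_zero fun b _ => by rw [if_neg (fun h => hA h.1), mul_zero]
    rw [Finset.sum_congr rfl h1, Finset.sum_ite_mem,
      Finset.inter_eq_right.2 (Finset.Icc_subset_Icc hk le_rfl),
      Finset.sum_sub_distrib, Finset.sum_sub_distrib]
    have d1 : ((Icc k l).sum fun a => (if a = l then (1:ℚ) else 2)) = 2 * (((Ico k l).card : ℚ)) + 1 := by
      have h3 : ((Ico k l).sum fun a => (if a = l then (1:ℚ) else 2))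
          = (Ico k l).sum (fun _ => (2:ℚ)) :=
        Finset.sum_congr rfl fun a ha => by rw [if_neg (Nat.ne_of_lt (mem_Ico.1 ha).2)]
      rw [← Finset.Ico_insert_right hkl, Finset.sum_insert (by simp), if_pos rfl, h3,
        Finset.sum_const, nsmul_eq_mul]
      ring
    have d3 : ((Icc k l).sum fun a =>
        (if a - 1 ∈ Icc k l then (if η a = η (a-1) then (1:ℚ) else 0) else 0)) = ((Ico k l).sum fun a => if η a = η (a + 1) then (1 : ℚ) else 0) := by
      have h0 : ∀ a ∈ Icc k l,
          (if a - 1 ∈ Icc k l then (if η a = η (a-1) then (1:ℚ) else 0) else 0)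
          = if a ∈ Icc (k+1) l then (if η a = η (a-1) then (1:ℚ) else 0) else 0 := by
        intro a ha
        obtain ⟨h1', h2'⟩ := mem_Icc.1 ha
        by_cases h : a - 1 ∈ Icc k l
        · obtain ⟨h3', h4'⟩ := mem_Icc.1 h
          rw [if_pos h, if_pos (mem_Icc.2 ⟨by omega, h2'⟩)]
        · rw [if_neg h, if_neg (fun hc => h (mem_Icc.2
            (by obtain ⟨u, v⟩ := mem_Icc.1 hc; omega)))]
      rw [Finset.sum_congr rfl h0, Finset.sum_ite_mem,
        Finset.inter_eq_right.2 (Finset.Icc_subset_Icc (by omega) le_rfl)]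
      have himg : Icc (k+1) l = (Ico k l).image (fun x => x + 1) := by
        ext x
        simp only [mem_Icc, Finset.mem_image, mem_Ico]
        constructor
        · intro h
          exact ⟨x - 1, ⟨by omega, by omega⟩, by omega⟩
        · rintro ⟨y, hy, rfl⟩
          omega
      rw [himg, Finset.sum_image (by intro x _ y _ h; simp only at h; omega)]
      refine Finset.sum_congr rfl fun a _ => ?_
      simp only [Nat.add_sub_cancel]
      rcases eq_or_ne (η a) (η (a+1)) with h | h
      · rw [if_pos h.symm, if_pos h]
      · rw [if_neg (fun hc => h hc.symm), if_neg h]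
    have d2 : ((Icc k l).sum fun a =>
        (if a + 1 ∈ Icc k l then (if η a = η (a+1) then (1:ℚ) else 0) else 0)) = ((Ico k l).sum fun a => if η a = η (a + 1) then (1 : ℚ) else 0) := by
      have h0 : ∀ a ∈ Icc k l,
          (if a + 1 ∈ Icc k l then (if η a = η (a+1) then (1:ℚ) else 0) else 0)
          = if a ∈ Ico k l then (if η a = η (a+1) then (1:ℚ) else 0) else 0 := by
        intro a ha
        obtain ⟨h1', h2'⟩ := mem_Icc.1 ha
        by_cases h : a + 1 ∈ Icc k l
        · obtain ⟨h3', h4'⟩ := mem_Icc.1 h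
          rw [if_pos h, if_pos (mem_Ico.2 ⟨h1', by omega⟩)]
        · rw [if_neg h, if_neg (fun hc => h (mem_Icc.2
            (by obtain ⟨u, v⟩ := mem_Ico.1 hc; omega)))]
      rw [Finset.sum_congr rfl h0, Finset.sum_ite_mem,
        Finset.inter_eq_right.2 Finset.Ico_subset_Icc_self]
    rw [d1, d3, d2]
    ring
  -- difference of the quadratic parts
  have hXX' : ((Icc 1 l).sum fun a => (Icc 1 l).sum fun b =>
        (cartanA l a b : ℚ) * pairQ (m a) (m b))
      - ((Icc 1 l).sum fun a => (Icc 1 l).sum fun b =>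
        (cartanA l a b : ℚ) * pairQ (m' a) (m' b))
      = (2 * ((Ico k l).sum fun a => TQ N (η a) fun i => ((m a) i : ℚ)) + (TQ N (η l) fun i => ((m l) i : ℚ)) - ((Ico (k - 1) l).sum fun a => TQ N (η (a + 1)) fun i => ((m a) i : ℚ)) - ((Ico k l).sum fun a => TQ N (η a) fun i => ((m (a + 1)) i : ℚ))) + (2 * ((Ico k l).sum fun a => TQ N (η a) fun i => ((m a) i : ℚ)) + (TQ N (η l) fun i => ((m l) i : ℚ)) - ((Ico (k - 1) l).sum fun a => TQ N (η (a + 1)) fun i => ((m a) i : ℚ)) - ((Ico k l).sum fun a => TQ N (η a) fun i => ((m (a + 1)) i : ℚ)))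
        - (2 * (((Ico k l).card : ℚ)) + 1 - 2 * ((Ico k l).sum fun a => if η a = η (a + 1) then (1 : ℚ) else 0)) := by
    rw [← Finset.sum_sub_distrib]
    have h1 : ∀ a ∈ Icc 1 l, (((Icc 1 l).sum fun b =>
          (cartanA l a b : ℚ) * pairQ (m a) (m b))
        - ((Icc 1 l).sum fun b => (cartanA l a b : ℚ) * pairQ (m' a) (m' b)))
        = ((Icc 1 l).sum fun b => (cartanA l a b : ℚ) *
            (if b ∈ Icc k l then TQ N (η b) (fun i => ((m a) i : ℚ)) else 0))
          + ((Icc 1 l).sum fun b => (cartanA l a b : ℚ) *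
            (if a ∈ Icc k l then TQ N (η a) (fun i => ((m b) i : ℚ)) else 0))
          - ((Icc 1 l).sum fun b => (cartanA l a b : ℚ) *
            (if a ∈ Icc k l ∧ b ∈ Icc k l then (if η a = η b then (1:ℚ) else 0) else 0)) := by
      intro a ha
      rw [← Finset.sum_sub_distrib, ← Finset.sum_add_distrib, ← Finset.sum_sub_distrib]
      refine Finset.sum_congr rfl fun b hb => ?_
      rw [← mul_sub, hDelta a ha b hb]
      ring
    rw [Finset.sum_congr rfl h1, Finset.sum_sub_distrib, Finset.sum_add_distrib,
      hS1, hS2, hS3]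
  -- difference of the linear parts
  have hYY' : ((Icc 1 l).sum fun a => pairQ (L a) (m a))
      - ((Icc 1 l).sum fun a => pairQ (L a) (m' a))
      = ((Icc k l).sum fun a => TQ N (η a) fun i => ((L a) i : ℚ)) := by
    rw [← Finset.sum_sub_distrib]
    have h1 : ∀ a ∈ Icc 1 l, pairQ (L a) (m a) - pairQ (L a) (m' a)
        = if a ∈ Icc k l then TQ N (η a) (fun i => ((L a) i : ℚ)) else 0 := by
      intro a ha
      have hal := (mem_Icc.1 ha).2
      rw [pairQ_eq_PQ N (L a) (m a) (hsupL a hal) (hsupm a hal),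
        pairQ_eq_PQ N (L a) (m' a) (hsupL a hal) (hsupm' a hal)]
      by_cases hA : a ∈ Icc k l
      · obtain ⟨hka, -⟩ := mem_Icc.1 hA
        rw [if_pos hA, hdecomp a hka hal, PQ_add_right,
          PQ_d_right N (η a) (hη1 a hka hal) (hηN a hal)]
        ring
      · rw [if_neg hA, hdecomp' a (fun h => hA (mem_Icc.2 h))]
        ring
    rw [Finset.sum_congr rfl h1, Finset.sum_ite_mem,
      Finset.inter_eq_right.2 (Finset.Icc_subset_Icc hk le_rfl)]
  -- rewrite the right-hand side tail sums
  have e1 : ((Ico k l).sum fun a => (tailSum (m a) (η a) : ℚ)) = ((Ico k l).sum fun a => TQ N (η a) fun i => ((m a) i : ℚ)) :=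
    Finset.sum_congr rfl fun a ha =>
      tailSum_eq_TQ N (η a) (m a) (hsupm a (le_of_lt (mem_Ico.1 ha).2))
  have e2 : ((Ico (k - 1) l).sum fun a => (tailSum (m a) (η (a + 1)) : ℚ)) = ((Ico (k - 1) l).sum fun a => TQ N (η (a + 1)) fun i => ((m a) i : ℚ)) :=
    Finset.sum_congr rfl fun a ha =>
      tailSum_eq_TQ N (η (a + 1)) (m a) (hsupm a (le_of_lt (mem_Ico.1 ha).2))
  have e3 : ((Ico k l).sum fun a => (tailSum (m (a + 1)) (η a) : ℚ)) = ((Ico k l).sum fun a => TQ N (η a) fun i => ((m (a + 1)) i : ℚ)) :=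
    Finset.sum_congr rfl fun a ha =>
      tailSum_eq_TQ N (η a) (m (a + 1)) (hsupm (a + 1)
        (by have := (mem_Ico.1 ha).2; omega))
  have e4 : (tailSum (m l) (η l) : ℚ) = (TQ N (η l) fun i => ((m l) i : ℚ)) :=
    tailSum_eq_TQ N (η l) (m l) (hsupm l le_rfl)
  have e5 : ((Icc k l).sum fun a => (tailSum (L a) (η a) : ℚ)) = ((Icc k l).sum fun a => TQ N (η a) fun i => ((L a) i : ℚ)) :=
    Finset.sum_congr rfl fun a ha =>
      tailSum_eq_TQ N (η a) (L a) (hsupL a (mem_Icc.1 ha).2)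
  have e6 : ((Ico k l).sum fun a => if η a = η (a + 1) then (0:ℚ) else 1)
      = (((Ico k l).card : ℚ)) - ((Ico k l).sum fun a => if η a = η (a + 1) then (1 : ℚ) else 0) := by
    have h : ∀ a ∈ Ico k l, (if η a = η (a + 1) then (0:ℚ) else 1)
        = 1 - (if η a = η (a + 1) then (1:ℚ) else 0) := by
      intro a _
      split_ifs <;> ring
    rw [Finset.sum_congr rfl h, Finset.sum_sub_distrib, Finset.sum_const,
      nsmul_eq_mul, mul_one]
  unfold chargeA
  rw [e1, e2, e3, e4, e5, e6]
  linarith [hXX', hYY']
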